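/- Let f : ℝ^m → ℝ^p, m ≥ p > 0, be a real-analytic map with f(0)=0, and let G : ℝ^m × ℝⁿ → ℝ^p × ℝⁿ be given by G(x,y) = (f(x), y). Then f satisfies condition (⋆) if and only if G satisfies condition (⋆); that is, [there exists ε₀>0 with closure(M(f) \ f⁻¹(Disc f)) ∩ f⁻¹(0) ∩ B_{ε₀} ⊆ {0}] holds if and only if [there exists ε₀>0 with closure(M(G) \ G⁻¹(Disc G)) ∩ G⁻¹(0) ∩ B_{ε₀} ⊆ {(0,0)}] holds. -/

import Mathlib

open Metric Set Function

noncomputable section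

/-- The singular set of a differentiable map between real normed spaces. -/
def singSet {E F : Type*} [NormedAddCommGroup E] [NormedSpace ℝ E]
    [NormedAddCommGroup F] [NormedSpace ℝ F] (G : E → F) : Set E :=
  {x | ¬ Function.Surjective (fderiv ℝ G x)}

/-- The discriminant of a map between real normed spaces. -/
def discSet {E F : Type*} [NormedAddCommGroup E] [NormedSpace ℝ E]
    [NormedAddCommGroup F] [NormedSpace ℝ F] (G : E → F) : Set F :=
  closure (G '' singSet G) ∪ (closure (range G) \ interior (range G))

/-- The Milnor set of `f : ℝ^m → ℝ^p`. -/
def milnorSet {m p : ℕ} (f : EuclideanSpace ℝ (Fin m) → EuclideanSpace ℝ (Fin p)) :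
    Set (EuclideanSpace ℝ (Fin m)) :=
  {x | ¬ Function.Surjective
    (fun v : EuclideanSpace ℝ (Fin m) => (fderiv ℝ f x v, (inner ℝ x v : ℝ)))}

/-- The Milnor set of a map on a product, with the product inner product
`⟨(x,y),(v,w)⟩ = ⟨x,v⟩ + ⟨y,w⟩`. -/
def milnorSetProd {m n p k : ℕ}
    (G : EuclideanSpace ℝ (Fin m) × EuclideanSpace ℝ (Fin n) →
         EuclideanSpace ℝ (Fin p) × EuclideanSpace ℝ (Fin k)) :
    Set (EuclideanSpace ℝ (Fin m) × EuclideanSpace ℝ (Fin n)) :=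
  {q | ¬ Function.Surjective
    (fun v : EuclideanSpace ℝ (Fin m) × EuclideanSpace ℝ (Fin n) =>
      (fderiv ℝ G q v, ((inner ℝ q.1 v.1 : ℝ) + (inner ℝ q.2 v.2 : ℝ))))}

/-- The Euclidean ball of radius `r` centred at the origin of a product space. -/
def pball {E F : Type*} [NormedAddCommGroup E] [NormedAddCommGroup F] (r : ℝ) :
    Set (E × F) :=
  {q | ‖q.1‖ ^ 2 + ‖q.2‖ ^ 2 < r ^ 2}

theorem aux_surj_milnor {m n p : ℕ}
    (Df : EuclideanSpace ℝ (Fin m) →L[ℝ] EuclideanSpace ℝ (Fin p))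
    (x : EuclideanSpace ℝ (Fin m)) (y : EuclideanSpace ℝ (Fin n)) :
    Surjective (fun v : EuclideanSpace ℝ (Fin m) × EuclideanSpace ℝ (Fin n) =>
      ((Df v.1, v.2), (inner ℝ x v.1 : ℝ) + (inner ℝ y v.2 : ℝ))) ↔
    Surjective (fun v : EuclideanSpace ℝ (Fin m) => (Df v, (inner ℝ x v : ℝ))) := by
  constructor
  · rintro h ⟨a, c⟩
    obtain ⟨⟨v, w⟩, hv⟩ := h ((a, 0), c)
    simp only [Prod.mk.injEq] at hv
    obtain ⟨⟨h1, h2⟩, h3⟩ := hv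
    subst h2
    rw [inner_zero_right] at h3
    refine ⟨v, ?_⟩
    simp only [Prod.mk.injEq]
    exact ⟨h1, by linarith⟩
  · rintro h ⟨⟨a, b⟩, c⟩
    obtain ⟨v, hv⟩ := h (a, c - inner ℝ y b)
    simp only [Prod.mk.injEq] at hv
    refine ⟨(v, b), ?_⟩
    simp only [Prod.mk.injEq]
    exact ⟨⟨hv.1, trivial⟩, by rw [hv.2]; ring⟩

theorem aux_surj_sing {m n p : ℕ}
    (Df : EuclideanSpace ℝ (Fin m) →L[ℝ] EuclideanSpace ℝ (Fin p)) :
    Surjective (fun v : EuclideanSpace ℝ (Fin m) × EuclideanSpace ℝ (Fin n) =>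
      ((Df v.1 : EuclideanSpace ℝ (Fin p)), v.2)) ↔ Surjective Df := by
  constructor
  · intro h a
    obtain ⟨⟨v, w⟩, hv⟩ := h (a, 0)
    simp only [Prod.mk.injEq] at hv
    exact ⟨v, hv.1⟩
  · rintro h ⟨a, b⟩
    obtain ⟨v, hv⟩ := h a
    exact ⟨(v, b), by simp [hv]⟩

theorem aux_fderiv {m n p : ℕ} (f : EuclideanSpace ℝ (Fin m) → EuclideanSpace ℝ (Fin p))
    (hf : AnalyticOnNhd ℝ f univ)
    (q : EuclideanSpace ℝ (Fin m) × EuclideanSpace ℝ (Fin n)) :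
    fderiv ℝ (fun q : EuclideanSpace ℝ (Fin m) × EuclideanSpace ℝ (Fin n) => (f q.1, q.2)) q =
      ((fderiv ℝ f q.1).comp (ContinuousLinearMap.fst ℝ _ _)).prod
        (ContinuousLinearMap.snd ℝ _ _) := by
  have h1 : HasFDerivAt (fun q : EuclideanSpace ℝ (Fin m) × EuclideanSpace ℝ (Fin n) => f q.1)
      ((fderiv ℝ f q.1).comp (ContinuousLinearMap.fst ℝ _ _)) q :=
    ((hf q.1 (mem_univ _)).differentiableAt.hasFDerivAt).comp q (hasFDerivAt_fst)
  exact (h1.prodMk (hasFDerivAt_snd)).fderiv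

theorem aux_range {m n p : ℕ} (f : EuclideanSpace ℝ (Fin m) → EuclideanSpace ℝ (Fin p)) :
    range (fun q : EuclideanSpace ℝ (Fin m) × EuclideanSpace ℝ (Fin n) => (f q.1, q.2)) =
      range f ×ˢ (univ : Set (EuclideanSpace ℝ (Fin n))) := by
  ext ⟨a, b⟩
  simp only [mem_range, mem_prod, mem_univ, and_true, Prod.mk.injEq, Prod.exists]
  constructor
  · rintro ⟨x, y, hx, rfl⟩; exact ⟨x, hx⟩
  · rintro ⟨x, hx⟩; exact ⟨x, b, hx, rfl⟩

theorem aux_image {m n p : ℕ} (f : EuclideanSpace ℝ (Fin m) → EuclideanSpace ℝ (Fin p))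
    (s : Set (EuclideanSpace ℝ (Fin m))) :
    (fun q : EuclideanSpace ℝ (Fin m) × EuclideanSpace ℝ (Fin n) => (f q.1, q.2)) ''
        (s ×ˢ (univ : Set (EuclideanSpace ℝ (Fin n)))) =
      (f '' s) ×ˢ (univ : Set (EuclideanSpace ℝ (Fin n))) := by
  ext ⟨a, b⟩
  simp only [mem_image, mem_prod, mem_univ, and_true, Prod.mk.injEq, Prod.exists]
  constructor
  · rintro ⟨x, y, hx, hfx, rfl⟩; exact ⟨x, hx, hfx⟩
  · rintro ⟨x, hx, hfx⟩; exact ⟨x, b, hx, hfx, rfl⟩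

theorem aux_disc {m n p : ℕ} (f : EuclideanSpace ℝ (Fin m) → EuclideanSpace ℝ (Fin p))
    (hsing : singSet (fun q : EuclideanSpace ℝ (Fin m) × EuclideanSpace ℝ (Fin n) =>
        (f q.1, q.2)) = singSet f ×ˢ (univ : Set (EuclideanSpace ℝ (Fin n)))) :
    discSet (fun q : EuclideanSpace ℝ (Fin m) × EuclideanSpace ℝ (Fin n) => (f q.1, q.2)) =
      discSet f ×ˢ (univ : Set (EuclideanSpace ℝ (Fin n))) := by
  unfold discSet
  rw [hsing, aux_image, aux_range, closure_prod_eq, closure_prod_eq,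
    interior_prod_eq, closure_univ, interior_univ]
  ext ⟨a, b⟩
  simp only [mem_union, mem_prod, mem_univ, and_true, mem_diff]

theorem condition_star_iff_for_product_with_identity (m p n : ℕ) (hmp : p ≤ m) (hp : 0 < p)
    (f : EuclideanSpace ℝ (Fin m) → EuclideanSpace ℝ (Fin p))
    (hf : AnalyticOnNhd ℝ f univ) (hf0 : f 0 = 0) :
    (∃ ε₀ > (0 : ℝ),
        closure (milnorSet f \ f ⁻¹' discSet f) ∩ f ⁻¹' {0} ∩ ball 0 ε₀ ⊆ {0}) ↔
    (∃ ε₀ > (0 : ℝ),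
        closure
            (milnorSetProd
                (fun q : EuclideanSpace ℝ (Fin m) × EuclideanSpace ℝ (Fin n) =>
                  (f q.1, q.2)) \
              (fun q : EuclideanSpace ℝ (Fin m) × EuclideanSpace ℝ (Fin n) =>
                  (f q.1, q.2)) ⁻¹'
                discSet (fun q : EuclideanSpace ℝ (Fin m) × EuclideanSpace ℝ (Fin n) =>
                  (f q.1, q.2))) ∩
          (fun q : EuclideanSpace ℝ (Fin m) × EuclideanSpace ℝ (Fin n) =>
              (f q.1, q.2)) ⁻¹' {(0, 0)} ∩
          pball ε₀ ⊆ {(0, 0)}) := by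
  set G : EuclideanSpace ℝ (Fin m) × EuclideanSpace ℝ (Fin n) →
      EuclideanSpace ℝ (Fin p) × EuclideanSpace ℝ (Fin n) := fun q => (f q.1, q.2) with hGdef
  -- the singular set of G
  have hsing : singSet G = singSet f ×ˢ (univ : Set (EuclideanSpace ℝ (Fin n))) := by
    ext ⟨x, y⟩
    simp only [singSet, mem_setOf_eq, mem_prod, mem_univ, and_true]
    rw [aux_fderiv f hf]
    have hfun : ⇑(((fderiv ℝ f x).comp
          (ContinuousLinearMap.fst ℝ (EuclideanSpace ℝ (Fin m)) (EuclideanSpace ℝ (Fin n)))).prod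
        (ContinuousLinearMap.snd ℝ (EuclideanSpace ℝ (Fin m)) (EuclideanSpace ℝ (Fin n)))) =
        fun v : EuclideanSpace ℝ (Fin m) × EuclideanSpace ℝ (Fin n) =>
          ((fderiv ℝ f x v.1 : EuclideanSpace ℝ (Fin p)), v.2) := by
      funext v; rfl
    rw [hfun, aux_surj_sing]
  -- the Milnor set of G
  have hmil : milnorSetProd G = milnorSet f ×ˢ (univ : Set (EuclideanSpace ℝ (Fin n))) := by
    ext ⟨x, y⟩
    simp only [milnorSetProd, milnorSet, mem_setOf_eq, mem_prod, mem_univ, and_true]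
    rw [aux_fderiv f hf]
    have hfun : (fun v : EuclideanSpace ℝ (Fin m) × EuclideanSpace ℝ (Fin n) =>
        ((((fderiv ℝ f x).comp
            (ContinuousLinearMap.fst ℝ (EuclideanSpace ℝ (Fin m)) (EuclideanSpace ℝ (Fin n)))).prod
          (ContinuousLinearMap.snd ℝ (EuclideanSpace ℝ (Fin m)) (EuclideanSpace ℝ (Fin n)))) v,
          ((inner ℝ x v.1 : ℝ) + (inner ℝ y v.2 : ℝ)))) =
        fun v : EuclideanSpace ℝ (Fin m) × EuclideanSpace ℝ (Fin n) =>
          (((fderiv ℝ f x v.1 : EuclideanSpace ℝ (Fin p)), v.2),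
            (inner ℝ x v.1 : ℝ) + (inner ℝ y v.2 : ℝ)) := by
      funext v; rfl
    rw [hfun, aux_surj_milnor]
  -- the discriminant of G
  have hdisc : discSet G = discSet f ×ˢ (univ : Set (EuclideanSpace ℝ (Fin n))) :=
    aux_disc f hsing
  -- the big closure set
  have hbig : milnorSetProd G \ G ⁻¹' discSet G =
      (milnorSet f \ f ⁻¹' discSet f) ×ˢ (univ : Set (EuclideanSpace ℝ (Fin n))) := by
    rw [hmil, hdisc]
    ext ⟨x, y⟩
    simp only [mem_diff, mem_prod, mem_univ, and_true, mem_preimage]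
    exact Iff.rfl
  have hclo : closure (milnorSetProd G \ G ⁻¹' discSet G) =
      closure (milnorSet f \ f ⁻¹' discSet f) ×ˢ (univ : Set (EuclideanSpace ℝ (Fin n))) := by
    rw [hbig, closure_prod_eq, closure_univ]
  constructor
  · rintro ⟨ε, hε, h⟩
    refine ⟨ε, hε, ?_⟩
    rintro ⟨x, y⟩ ⟨⟨hcl, hker⟩, hb⟩
    rw [hclo] at hcl
    have hx1 : x ∈ closure (milnorSet f \ f ⁻¹' discSet f) := hcl.1
    have hker' : f x = 0 ∧ y = 0 := by
      simpa [Prod.ext_iff] using hker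
    have hb' : ‖x‖ ^ 2 + ‖y‖ ^ 2 < ε ^ 2 := hb
    have hy0 : y = 0 := hker'.2
    have hxn : ‖x‖ < ε := by
      refine lt_of_pow_lt_pow_left₀ 2 hε.le ?_
      rw [hy0] at hb'
      simpa using hb'
    have hx0 : x = 0 := h ⟨⟨hx1, by simpa using hker'.1⟩, mem_ball_zero_iff.mpr hxn⟩
    simp [hx0, hy0, Prod.ext_iff]
  · rintro ⟨ε, hε, h⟩
    refine ⟨ε, hε, ?_⟩
    rintro x ⟨⟨hcl, hker⟩, hb⟩
    have hxn : ‖x‖ < ε := mem_ball_zero_iff.mp hb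
    have hmem : (x, (0 : EuclideanSpace ℝ (Fin n))) ∈ ({(0, 0)} : Set (EuclideanSpace ℝ (Fin m) × EuclideanSpace ℝ (Fin n))) := by
      refine h ⟨⟨?_, ?_⟩, ?_⟩
      · rw [hclo]
        exact ⟨hcl, mem_univ _⟩
      · simp only [mem_preimage, mem_singleton_iff]
        have hfx : f x = 0 := by simpa using hker
        show (f x, (0 : EuclideanSpace ℝ (Fin n))) = (0, 0)
        rw [hfx]
      · show ‖x‖ ^ 2 + ‖(0 : EuclideanSpace ℝ (Fin n))‖ ^ 2 < ε ^ 2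
        rw [norm_zero]
        simpa using pow_lt_pow_left₀ hxn (norm_nonneg x) two_ne_zero
    have hx0 : x = 0 := by
      simpa [Prod.ext_iff] using hmem
    exact hx0
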